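/- Let R be a right C4*-ring. Assume that R = Σ × T for rings Σ and T, where Σ is semisimple artinian, the right regular module T_T is summand-square-free, and T satisfies the left square-free transfer condition LSF. Then R is a left C4*-ring. -/

import Mathlib

open MulOpposite

section C4Defs

/-- A submodule is a direct summand if it has a complement. -/
def IsDirectSummand {R M : Type*} [Ring R] [AddCommGroup M] [Module R M]
    (A : Submodule R M) : Prop :=
  ∃ B : Submodule R M, IsCompl A B

/-- `M` is a `C4`-module over `R`: for every internal direct sum decomposition `M = A ⊕ B`
and every homomorphism `f : A → B` whose kernel is a direct summand of `A`, the image of `f`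
is a direct summand of `B`. -/
def IsC4Module (R M : Type*) [Ring R] [AddCommGroup M] [Module R M] : Prop :=
  ∀ A B : Submodule R M, IsCompl A B → ∀ f : A →ₗ[R] B,
    IsDirectSummand (LinearMap.ker f) → IsDirectSummand (LinearMap.range f)

/-- `M` is a `C4*`-module: every submodule of `M` is a `C4`-module. -/
def IsC4StarModule (R M : Type*) [Ring R] [AddCommGroup M] [Module R M] : Prop :=
  ∀ N : Submodule R M, IsC4Module R N

/-- `M` is square-free: no nonzero submodules `A`, `B` with `A ⊓ B = ⊥` and `A ≅ B`. -/
def IsSquareFreeModule (R M : Type*) [Ring R] [AddCommGroup M] [Module R M] : Prop :=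
  ∀ A B : Submodule R M, A ≠ ⊥ → B ≠ ⊥ → A ⊓ B = ⊥ → IsEmpty (A ≃ₗ[R] B)

/-- `M` is summand-square-free: no nonzero direct summands `A`, `B` with `A ⊓ B = ⊥`
and `A ≅ B`. -/
def IsSummandSquareFree (R M : Type*) [Ring R] [AddCommGroup M] [Module R M] : Prop :=
  ∀ A B : Submodule R M, IsDirectSummand A → IsDirectSummand B →
    A ≠ ⊥ → B ≠ ⊥ → A ⊓ B = ⊥ → IsEmpty (A ≃ₗ[R] B)

/-- `X` is an essential submodule of `A`. -/
def IsEssentialIn {R M : Type*} [Ring R] [AddCommGroup M] [Module R M]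
    (X A : Submodule R M) : Prop :=
  X ≤ A ∧ ∀ N : Submodule R M, N ≤ A → N ≠ ⊥ → X ⊓ N ≠ ⊥

/-- A triple `(X, Y, f)` where `X`, `Y` are semisimple direct summands of `M` with
`X ⊓ Y = ⊥` and `f : X ≅ Y` an isomorphism.  These are the elements of the poset `S(M)`
from the definition of semi-weak-CS modules. -/
structure SWTriple (R M : Type*) [Ring R] [AddCommGroup M] [Module R M] where
  X : Submodule R M
  Y : Submodule R M
  semisimpleX : IsSemisimpleModule R X
  semisimpleY : IsSemisimpleModule R Y
  summandX : IsDirectSummand X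
  summandY : IsDirectSummand Y
  disj : X ⊓ Y = ⊥
  f : X ≃ₗ[R] Y

/-- The extension order on the poset `S(M)` of triples: `(X₁,Y₁,f₁) ≤ (X₂,Y₂,f₂)` iff
`X₁ ≤ X₂`, `Y₁ ≤ Y₂` and `f₂` restricts to `f₁` on `X₁`. -/
def SWTriple.Extends {R M : Type*} [Ring R] [AddCommGroup M] [Module R M]
    (t s : SWTriple R M) : Prop :=
  ∃ hX : t.X ≤ s.X, t.Y ≤ s.Y ∧
    ∀ x : t.X, (s.f ⟨x.1, hX x.2⟩ : M) = (t.f x : M)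

/-- `M` is semi-weak-CS: for every chain in the poset `S(M)`, with `X` the union of the first
components and `Y` the union of the second components, there are direct summands `A`, `B`
of `M` with `X` essential in `A` and `Y` essential in `B`. -/
def IsSemiWeakCS (R M : Type*) [Ring R] [AddCommGroup M] [Module R M] : Prop :=
  ∀ C : Set (SWTriple R M), IsChain SWTriple.Extends C →
    ∃ A B : Submodule R M, IsDirectSummand A ∧ IsDirectSummand B ∧
      IsEssentialIn (⨆ t ∈ C, t.X) A ∧ IsEssentialIn (⨆ t ∈ C, t.Y) B

/-- `M` is strongly `C4*` if it is both semi-weak-CS and `C4*`. -/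
def IsStronglyC4StarModule (R M : Type*) [Ring R] [AddCommGroup M] [Module R M] : Prop :=
  IsSemiWeakCS R M ∧ IsC4StarModule R M

/-- `R` is a right `C4*`-ring: the right regular module `R_R` (i.e. `R` as a module over
`Rᵐᵒᵖ`) is a `C4*`-module. -/
def IsRightC4StarRing (R : Type*) [Ring R] : Prop := IsC4StarModule Rᵐᵒᵖ R

/-- `R` is a left `C4*`-ring: the left regular module `_RR` is a `C4*`-module. -/
def IsLeftC4StarRing (R : Type*) [Ring R] : Prop := IsC4StarModule R R

/-- `R` is a strongly right `C4*`-ring. -/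
def IsStronglyRightC4StarRing (R : Type*) [Ring R] : Prop := IsStronglyC4StarModule Rᵐᵒᵖ R

/-- `R` is a strongly left `C4*`-ring. -/
def IsStronglyLeftC4StarRing (R : Type*) [Ring R] : Prop := IsStronglyC4StarModule R R

/-- `R` is right semi-weak-CS. -/
def IsRightSemiWeakCSRing (R : Type*) [Ring R] : Prop := IsSemiWeakCS Rᵐᵒᵖ R

/-- `R` is left semi-weak-CS. -/
def IsLeftSemiWeakCSRing (R : Type*) [Ring R] : Prop := IsSemiWeakCS R R

/-- The left square-free transfer condition `LSF`: if the right regular module `T_T` is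
summand-square-free then the left regular module `_TT` is square-free. -/
def LSF (T : Type*) [Ring T] : Prop :=
  IsSummandSquareFree Tᵐᵒᵖ T → IsSquareFreeModule T T

end C4Defs

section Corner

variable {T : Type*} [Ring T]

/-- The corner `eTe = {x : T | e * x = x ∧ x * e = x}` as a non-unital subring. -/
def cornerSubring (e : T) : NonUnitalSubring T where
  carrier := {x : T | e * x = x ∧ x * e = x}
  add_mem' := by
    rintro a b ⟨ha1, ha2⟩ ⟨hb1, hb2⟩
    exact ⟨by rw [mul_add, ha1, hb1], by rw [add_mul, ha2, hb2]⟩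
  zero_mem' := ⟨mul_zero e, zero_mul e⟩
  neg_mem' := by
    rintro a ⟨ha1, ha2⟩
    exact ⟨by rw [mul_neg, ha1], by rw [neg_mul, ha2]⟩
  mul_mem' := by
    rintro a b ⟨ha1, ha2⟩ ⟨hb1, hb2⟩
    exact ⟨by rw [← mul_assoc, ha1], by rw [mul_assoc, hb2]⟩

theorem mem_cornerSubring {e x : T} :
    x ∈ cornerSubring e ↔ e * x = x ∧ x * e = x := Iff.rfl

/-- The corner ring `eTe` associated to an idempotent `e` of `T`; its identity is `e`. -/
def Corner (e : T) (he : IsIdempotentElem e) : Type _ := ↥(cornerSubring e)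

instance {e : T} {he : IsIdempotentElem e} : Ring (Corner e he) :=
  { (inferInstance : NonUnitalRing ↥(cornerSubring e)) with
    one := ⟨e, he, he⟩
    one_mul := fun x => Subtype.ext (mem_cornerSubring.mp x.2).1
    mul_one := fun x => Subtype.ext (mem_cornerSubring.mp x.2).2 }

/-- `eT = {x : T | e * x = x}` as an additive subgroup; it is a left module over the
corner ring `eTe`. -/
def leftPart (e : T) : AddSubgroup T where
  carrier := {x : T | e * x = x}
  add_mem' := by
    intro a b ha hb
    simp only [Set.mem_setOf_eq] at *
    rw [mul_add, ha, hb]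
  zero_mem' := mul_zero e
  neg_mem' := by
    intro a ha
    simp only [Set.mem_setOf_eq] at *
    rw [mul_neg, ha]

/-- `Te = {x : T | x * e = x}` as an additive subgroup; it is a right module over the
corner ring `eTe`. -/
def rightPart (e : T) : AddSubgroup T where
  carrier := {x : T | x * e = x}
  add_mem' := by
    intro a b ha hb
    simp only [Set.mem_setOf_eq] at *
    rw [add_mul, ha, hb]
  zero_mem' := zero_mul e
  neg_mem' := by
    intro a ha
    simp only [Set.mem_setOf_eq] at *
    rw [neg_mul, ha]

theorem mem_leftPart {e x : T} : x ∈ leftPart e ↔ e * x = x := Iff.rfl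

theorem mem_rightPart {e x : T} : x ∈ rightPart e ↔ x * e = x := Iff.rfl

/-- `eT` is a (unital) left module over the corner ring `eTe`. -/
instance {e : T} {he : IsIdempotentElem e} : Module (Corner e he) ↥(leftPart e) where
  smul c x := ⟨c.1 * x.1, by
    have h1 : e * c.1 = c.1 := (mem_cornerSubring.mp c.2).1
    show e * (c.1 * x.1) = c.1 * x.1
    rw [← mul_assoc, h1]⟩
  one_smul x := Subtype.ext (by
    show e * x.1 = x.1
    exact mem_leftPart.mp x.2)
  mul_smul a b x := Subtype.ext (by
    show (a.1 * b.1) * x.1 = a.1 * (b.1 * x.1)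
    rw [mul_assoc])
  smul_zero a := Subtype.ext (by
    show a.1 * 0 = 0
    exact mul_zero _)
  smul_add a x y := Subtype.ext (by
    show a.1 * (x.1 + y.1) = a.1 * x.1 + a.1 * y.1
    exact mul_add _ _ _)
  add_smul a b x := Subtype.ext (by
    show (a.1 + b.1) * x.1 = a.1 * x.1 + b.1 * x.1
    exact add_mul _ _ _)
  zero_smul x := Subtype.ext (by
    show (0 : T) * x.1 = 0
    exact zero_mul _)

/-- `Te` is a (unital) right module over the corner ring `eTe`, i.e. a module over
`(eTe)ᵐᵒᵖ`. -/
instance {e : T} {he : IsIdempotentElem e} : Module (Corner e he)ᵐᵒᵖ ↥(rightPart e) where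
  smul c x := ⟨x.1 * (unop c).1, by
    have h2 : (unop c).1 * e = (unop c).1 := (mem_cornerSubring.mp (unop c).2).2
    show (x.1 * (unop c).1) * e = x.1 * (unop c).1
    rw [mul_assoc, h2]⟩
  one_smul x := Subtype.ext (by
    show x.1 * e = x.1
    exact mem_rightPart.mp x.2)
  mul_smul a b x := Subtype.ext (by
    show x.1 * ((unop b).1 * (unop a).1) = (x.1 * (unop b).1) * (unop a).1
    rw [mul_assoc])
  smul_zero a := Subtype.ext (by
    show (0 : T) * (unop a).1 = 0
    exact zero_mul _)
  smul_add a x y := Subtype.ext (by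
    show (x.1 + y.1) * (unop a).1 = x.1 * (unop a).1 + y.1 * (unop a).1
    exact add_mul _ _ _)
  add_smul a b x := Subtype.ext (by
    show x.1 * ((unop a).1 + (unop b).1) = x.1 * (unop a).1 + x.1 * (unop b).1
    exact mul_add _ _ _)
  zero_smul x := Subtype.ext (by
    show x.1 * (0 : T) = 0
    exact mul_zero _)

/-- The hereditary side-transfer condition `HST`: for every idempotent `e` of `T`, if the
module `eT`/`Te` is summand-square-free as a right `eTe`-module (formalized on the carrier
`Te = rightPart e`, which carries the unital right `eTe`-action; at `e = 1` this is the right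
regular module `T_T`), then the left `eTe`-module (carrier `eT = leftPart e`, carrying the
unital left `eTe`-action; at `e = 1` this is the left regular module `_TT`) is square-free. -/
def HST (T : Type*) [Ring T] : Prop :=
  ∀ (e : T) (he : IsIdempotentElem e),
    IsSummandSquareFree (Corner e he)ᵐᵒᵖ ↥(rightPart e) →
      IsSquareFreeModule (Corner e he) ↥(leftPart e)

/-- The corner-stability axiom `CSA`: for every idempotent `e` of `T`, the left regular
module of the corner ring `eTe` is semi-weak-CS. -/
def CSA' (T : Type*) [Ring T] : Prop :=
  ∀ (e : T) (he : IsIdempotentElem e),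
    IsSemiWeakCS (Corner e he) (Corner e he)

end Corner

section SymmetryDatum

/-- A right-to-left symmetry datum on `R`: a ring decomposition `R ≅ S × T` where `S` is
semisimple artinian, the right regular module `T_T` is summand-square-free, the two ideals
`S`, `T` are orthogonal as right `R`-modules (no nonzero isomorphic right `R`-submodules),
and `T` satisfies `HST` and `CSA`. -/
structure RightToLeftSymmetryDatum (R S T : Type*) [Ring R] [Ring S] [Ring T] where
  iso : R ≃+* S × T
  semisimpleArtinian : IsSemisimpleRing S
  ssf : IsSummandSquareFree Tᵐᵒᵖ T
  orthogonal : ∀ A B : Submodule Rᵐᵒᵖ R,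
    (∀ a ∈ A, (iso a).2 = 0) → (∀ b ∈ B, (iso b).1 = 0) →
    A ≠ ⊥ → B ≠ ⊥ → IsEmpty (A ≃ₗ[Rᵐᵒᵖ] B)
  hst : HST T
  csa : CSA' T

end SymmetryDatum

section Beta

variable (R : Type*) [Ring R]

/-- The right annihilator `r_R(P) = {s : R | P s = 0}` of a right submodule `P` of `R`. -/
def rightAnnSet (P : Submodule Rᵐᵒᵖ R) : Set R := {s : R | ∀ p ∈ P, p * s = 0}

/-- The annihilator-bidual `β_r(P) = ℓ_R(r_R(P))`, as a right ideal of `R`. -/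
def betaR (P : Submodule Rᵐᵒᵖ R) : Submodule Rᵐᵒᵖ R where
  carrier := {r : R | ∀ s ∈ rightAnnSet R P, r * s = 0}
  add_mem' := by
    intro a b ha hb
    intro s hs
    rw [add_mul, ha s hs, hb s hs, add_zero]
  zero_mem' := by
    intro s hs
    exact zero_mul s
  smul_mem' := by
    intro c x hx s hs
    show (x * unop c) * s = 0
    rw [mul_assoc]
    refine hx _ ?_
    intro p hp
    rw [← mul_assoc]
    exact hs (p * unop c) (Submodule.smul_mem P c hp)

/-- A right ideal is a two-sided ideal which is a ring direct summand of `R` iff it is of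
the form `cR` for a central idempotent `c`. -/
def IsRingDirectSummandIdeal {R : Type*} [Ring R] (I : Submodule Rᵐᵒᵖ R) : Prop :=
  ∃ c : R, IsIdempotentElem c ∧ (∀ r : R, c * r = r * c) ∧ (∀ x : R, x ∈ I ↔ c * x = x)

/-- `R` has right semisimple annihilator asymmetry. -/
def HasRightSemisimpleAnnihilatorAsymmetry (R : Type*) [Ring R] : Prop :=
  ∃ P : Submodule Rᵐᵒᵖ R, IsSemisimpleModule Rᵐᵒᵖ P ∧ IsDirectSummand P ∧
    (¬ IsSemisimpleModule Rᵐᵒᵖ (betaR R P) ∨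
     (IsSemisimpleModule Rᵐᵒᵖ (betaR R P) ∧ ¬ IsRingDirectSummandIdeal (betaR R P)) ∨
     ¬ IsEssentialIn P (betaR R P))

end Beta


section AuxC4
variable {R₀ : Type*} [Ring R₀] {M₀ : Type*} [AddCommGroup M₀] [Module R₀ M₀]

/-- The `e`-fixed part `{x | e • x = x}` for a central element `e`. -/
def pPartAux (e : R₀) (hc : ∀ r : R₀, e * r = r * e) : Submodule R₀ M₀ where
  carrier := {x | e • x = x}
  add_mem' := by
    intro a b ha hb
    simp only [Set.mem_setOf_eq] at *
    rw [smul_add, ha, hb]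
  zero_mem' := smul_zero e
  smul_mem' := by
    intro r x hx
    simp only [Set.mem_setOf_eq] at *
    rw [smul_smul, hc, ← smul_smul, hx]

/-- The `e`-annihilated part `{x | e • x = 0}` for a central element `e`. -/
def qPartAux (e : R₀) (hc : ∀ r : R₀, e * r = r * e) : Submodule R₀ M₀ where
  carrier := {x | e • x = 0}
  add_mem' := by
    intro a b ha hb
    simp only [Set.mem_setOf_eq] at *
    rw [smul_add, ha, hb, add_zero]
  zero_mem' := smul_zero e
  smul_mem' := by
    intro r x hx
    simp only [Set.mem_setOf_eq] at *
    rw [smul_smul, hc, ← smul_smul, hx, smul_zero]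

theorem mem_pPartAux {e : R₀} {hc : ∀ r : R₀, e * r = r * e} {x : M₀} :
    x ∈ (pPartAux e hc : Submodule R₀ M₀) ↔ e • x = x := Iff.rfl

theorem mem_qPartAux {e : R₀} {hc : ∀ r : R₀, e * r = r * e} {x : M₀} :
    x ∈ (qPartAux e hc : Submodule R₀ M₀) ↔ e • x = 0 := Iff.rfl

theorem isCompl_pPart_qPart (e : R₀) (he : e * e = e) (hc : ∀ r : R₀, e * r = r * e) :
    IsCompl (pPartAux e hc : Submodule R₀ M₀) (qPartAux e hc) := by
  constructor
  · rw [disjoint_iff, Submodule.eq_bot_iff]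
    rintro x ⟨hp, hq⟩
    have hp' : e • x = x := hp
    have hq' : e • x = 0 := hq
    rw [← hp', hq']
  · rw [codisjoint_iff, eq_top_iff]
    intro x _
    refine Submodule.mem_sup.2 ⟨e • x, ?_, x - e • x, ?_, add_sub_cancel _ _⟩
    · rw [mem_pPartAux, smul_smul, he]
    · rw [mem_qPartAux, smul_sub, smul_smul, he, sub_self]

theorem isSemisimple_of_injective {N₀ : Type*} [AddCommGroup N₀] [Module R₀ N₀]
    (f : M₀ →ₗ[R₀] N₀) (hf : Function.Injective f) (hN : IsSemisimpleModule R₀ N₀) :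
    IsSemisimpleModule R₀ M₀ := by
  haveI := hN
  exact IsSemisimpleModule.congr (LinearEquiv.ofInjective f hf)

end AuxC4

section MainC4
variable {R₀ : Type*} [Ring R₀] {M₀ : Type*} [AddCommGroup M₀] [Module R₀ M₀]

theorem mainC4 (e : R₀) (he : e * e = e) (hc : ∀ r : R₀, e * r = r * e)
    (Hs : IsSemisimpleModule R₀ ↥(pPartAux e hc : Submodule R₀ M₀))
    (Hsf : ∀ X Y : Submodule R₀ M₀, X ≤ qPartAux e hc → Y ≤ qPartAux e hc →
      X ≠ ⊥ → Y ≠ ⊥ → X ⊓ Y = ⊥ → IsEmpty (X ≃ₗ[R₀] Y)) :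
    IsC4Module R₀ M₀ := by
  intro A B hAB f hker
  obtain ⟨K', hK'⟩ := hker
  have hA12 := isCompl_pPart_qPart (M₀ := ↥A) e he hc
  have hB12 := isCompl_pPart_qPart (M₀ := ↥B) e he hc
  have hfP : ∀ a : ↥A, a ∈ (pPartAux e hc : Submodule R₀ ↥A) →
      f a ∈ (pPartAux e hc : Submodule R₀ ↥B) := by
    intro a ha
    have ha' : e • a = a := ha
    show e • f a = f a
    rw [← map_smul, ha']
  have hfQ : ∀ a : ↥A, a ∈ (qPartAux e hc : Submodule R₀ ↥A) →
      f a ∈ (qPartAux e hc : Submodule R₀ ↥B) := by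
    intro a ha
    have ha' : e • a = 0 := ha
    show e • f a = 0
    rw [← map_smul, ha', map_zero]
  set C : Submodule R₀ ↥A :=
    qPartAux e hc ⊓ ((LinearMap.ker f ⊓ pPartAux e hc) ⊔ K') with hCdef
  have hCK : ∀ x : ↥A, x ∈ C → x ∈ LinearMap.ker f → x = 0 := by
    intro x hx hxK
    obtain ⟨hxq, hxs⟩ := hx
    obtain ⟨k₁, hk₁, k', hk', hsum⟩ := Submodule.mem_sup.1 hxs
    have hk'0 : k' = 0 := by
      have hk'K : k' ∈ LinearMap.ker f := by
        have hkx : k' = x - k₁ := by rw [← hsum]; abel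
        rw [hkx]
        exact Submodule.sub_mem _ hxK hk₁.1
      have := hK'.disjoint.le_bot (Submodule.mem_inf.2 ⟨hk'K, hk'⟩)
      simpa using this
    have hxk₁ : x = k₁ := by rw [← hsum, hk'0, add_zero]
    have hx12 : x ∈ (pPartAux e hc : Submodule R₀ ↥A) ⊓ qPartAux e hc :=
      ⟨hxk₁ ▸ hk₁.2, hxq⟩
    have := hA12.disjoint.le_bot hx12
    simpa using this
  have hmapC : Submodule.map f (qPartAux e hc : Submodule R₀ ↥A) = Submodule.map f C := by
    apply le_antisymm
    · rintro y ⟨a, ha, rfl⟩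
      have hatop : a ∈ LinearMap.ker f ⊔ K' := by rw [hK'.codisjoint.eq_top]; trivial
      obtain ⟨k, hk, k', hk', hsum⟩ := Submodule.mem_sup.1 hatop
      have hek : e • k ∈ LinearMap.ker f := by
        rw [LinearMap.mem_ker, map_smul, LinearMap.mem_ker.1 hk, smul_zero]
      have hk₂K : k - e • k ∈ LinearMap.ker f := Submodule.sub_mem _ hk hek
      have hk₂q : k - e • k ∈ (qPartAux e hc : Submodule R₀ ↥A) := by
        show e • (k - e • k) = 0
        rw [smul_sub, smul_smul, he, sub_self]
      refine Submodule.mem_map.2 ⟨a - (k - e • k), ⟨?_, ?_⟩, ?_⟩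
      · exact Submodule.sub_mem _ ha hk₂q
      · apply Submodule.mem_sup.2
        refine ⟨e • k, ⟨hek, ?_⟩, k', hk', ?_⟩
        · show e • (e • k) = e • k
          rw [smul_smul, he]
        · rw [← hsum]; abel
      · rw [map_sub, LinearMap.mem_ker.1 hk₂K, sub_zero]
    · exact Submodule.map_mono inf_le_left
  have hF₂ : Submodule.map f (qPartAux e hc : Submodule R₀ ↥A) = ⊥ := by
    by_contra hne
    have hC0 : C ≠ ⊥ := by
      intro h
      apply hne
      rw [hmapC, h, Submodule.map_bot]
    set φ : ↥C →ₗ[R₀] M₀ := A.subtype ∘ₗ C.subtype with hφdef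
    set ψ : ↥C →ₗ[R₀] M₀ := B.subtype ∘ₗ f ∘ₗ C.subtype with hψdef
    have hφinj : Function.Injective φ :=
      A.injective_subtype.comp C.injective_subtype
    have hψinj : Function.Injective ψ := by
      rw [← LinearMap.ker_eq_bot, Submodule.eq_bot_iff]
      intro x hx
      have hfx : f (x : ↥A) = 0 := by
        have hx' : B.subtype (f (C.subtype x)) = 0 := hx
        exact B.injective_subtype (by simpa using hx')
      exact Subtype.ext (hCK (x : ↥A) x.2 (LinearMap.mem_ker.2 hfx))
    have hXq : LinearMap.range φ ≤ (qPartAux e hc : Submodule R₀ M₀) := by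
      rintro _ ⟨c, rfl⟩
      have hc2 : e • ((c : ↥A)) = 0 := c.2.1
      show e • (((c : ↥A) : M₀)) = 0
      rw [← Submodule.coe_smul, hc2, Submodule.coe_zero]
    have hYq : LinearMap.range ψ ≤ (qPartAux e hc : Submodule R₀ M₀) := by
      rintro _ ⟨c, rfl⟩
      have hfc : e • f (c : ↥A) = 0 := hfQ (c : ↥A) c.2.1
      show e • ((f ((c : ↥A)) : M₀)) = 0
      rw [← Submodule.coe_smul, hfc, Submodule.coe_zero]
    obtain ⟨x, hxC, hx0⟩ := Submodule.ne_bot_iff C |>.1 hC0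
    have hxC0 : (⟨x, hxC⟩ : ↥C) ≠ 0 := by
      intro h
      exact hx0 (by simpa using congrArg (fun y : ↥C => (y : ↥A)) h)
    have hX0 : LinearMap.range φ ≠ ⊥ := by
      rw [Submodule.ne_bot_iff]
      refine ⟨φ ⟨x, hxC⟩, ⟨⟨x, hxC⟩, rfl⟩, ?_⟩
      intro h
      exact hxC0 (hφinj (by rw [h, map_zero]))
    have hY0 : LinearMap.range ψ ≠ ⊥ := by
      rw [Submodule.ne_bot_iff]
      refine ⟨ψ ⟨x, hxC⟩, ⟨⟨x, hxC⟩, rfl⟩, ?_⟩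
      intro h
      exact hxC0 (hψinj (by rw [h, map_zero]))
    have hXY : LinearMap.range φ ⊓ LinearMap.range ψ = ⊥ := by
      rw [Submodule.eq_bot_iff]
      intro z hz
      obtain ⟨hz1, hz2⟩ := Submodule.mem_inf.1 hz
      obtain ⟨c, rfl⟩ := hz1
      have hmemA : φ c ∈ A := SetLike.coe_mem ((c : ↥A))
      have hmemB : φ c ∈ B := by
        obtain ⟨c', hc'⟩ := hz2
        rw [← hc']
        exact SetLike.coe_mem (f ((c' : ↥A)))
      have := hAB.disjoint.le_bot (Submodule.mem_inf.2 ⟨hmemA, hmemB⟩)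
      simpa using this
    exact (Hsf _ _ hXq hYq hX0 hY0 hXY).false
      ((LinearEquiv.ofInjective φ hφinj).symm.trans (LinearEquiv.ofInjective ψ hψinj))
  have hrange : LinearMap.range f = Submodule.map f (pPartAux e hc : Submodule R₀ ↥A) := by
    have htop : (pPartAux e hc : Submodule R₀ ↥A) ⊔ qPartAux e hc = ⊤ :=
      hA12.codisjoint.eq_top
    rw [← Submodule.map_top, ← htop, Submodule.map_sup, hF₂, sup_bot_eq]
  set F₁ := Submodule.map f (pPartAux e hc : Submodule R₀ ↥A) with hF₁def
  have hF₁le : F₁ ≤ (pPartAux e hc : Submodule R₀ ↥B) := by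
    rintro _ ⟨a, ha, rfl⟩
    exact hfP a ha
  set B₁ : Submodule R₀ ↥B := pPartAux e hc with hB₁def
  have hB₁ss : IsSemisimpleModule R₀ ↥B₁ := by
    refine isSemisimple_of_injective
      (LinearMap.codRestrict (pPartAux e hc : Submodule R₀ M₀)
        (B.subtype ∘ₗ B₁.subtype) ?_) ?_ Hs
    · intro x
      have hx : e • ((x : ↥B)) = (x : ↥B) := x.2
      show e • (((x : ↥B) : M₀)) = ((x : ↥B) : M₀)
      rw [← Submodule.coe_smul, hx]
    · rw [← LinearMap.ker_eq_bot, LinearMap.ker_codRestrict, LinearMap.ker_eq_bot]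
      exact B.injective_subtype.comp B₁.injective_subtype
  haveI := hB₁ss
  obtain ⟨G, hG⟩ := exists_isCompl (Submodule.comap B₁.subtype F₁)
  rw [hrange]
  refine ⟨Submodule.map B₁.subtype G ⊔ (qPartAux e hc : Submodule R₀ ↥B), ?_, ?_⟩
  · rw [disjoint_iff, Submodule.eq_bot_iff]
    intro z hz
    obtain ⟨hzF, hzW⟩ := Submodule.mem_inf.1 hz
    obtain ⟨g, hgm, w, hw, hsum⟩ := Submodule.mem_sup.1 hzW
    obtain ⟨g₀, hg₀G, hg₀⟩ := Submodule.mem_map.1 hgm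
    have hzB₁ : z ∈ B₁ := hF₁le hzF
    have hgB₁ : g ∈ B₁ := hg₀ ▸ SetLike.coe_mem g₀
    have hw0 : w = 0 := by
      have hwB₁ : w ∈ B₁ := by
        have hwz : w = z - g := by rw [← hsum]; abel
        rw [hwz]
        exact Submodule.sub_mem _ hzB₁ hgB₁
      have := hB12.disjoint.le_bot (Submodule.mem_inf.2 ⟨hwB₁, hw⟩)
      simpa using this
    have hzg : z = g := by rw [← hsum, hw0, add_zero]
    have hzg₀ : (⟨z, hzB₁⟩ : ↥B₁) = g₀ := by
      apply Subtype.ext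
      show z = B₁.subtype g₀
      rw [hg₀]; exact hzg
    have hmem : (⟨z, hzB₁⟩ : ↥B₁) ∈ Submodule.comap B₁.subtype F₁ ⊓ G := by
      refine Submodule.mem_inf.2 ⟨?_, ?_⟩
      · exact hzF
      · rw [hzg₀]; exact hg₀G
    have h0 := hG.disjoint.le_bot hmem
    have h0' : (⟨z, hzB₁⟩ : ↥B₁) = 0 := by simpa using h0
    simpa using congrArg (fun y : ↥B₁ => (y : ↥B)) h0'
  · rw [codisjoint_iff, eq_top_iff]
    intro b _
    have h1 : e • b ∈ B₁ := by
      show e • (e • b) = e • b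
      rw [smul_smul, he]
    have h2 : b - e • b ∈ (qPartAux e hc : Submodule R₀ ↥B) := by
      show e • (b - e • b) = 0
      rw [smul_sub, smul_smul, he, sub_self]
    have htop : (⟨e • b, h1⟩ : ↥B₁) ∈ Submodule.comap B₁.subtype F₁ ⊔ G := by
      rw [hG.codisjoint.eq_top]; trivial
    obtain ⟨u, hu, v, hv, huv⟩ := Submodule.mem_sup.1 htop
    refine Submodule.mem_sup.2 ⟨(u : ↥B), hu, (v : ↥B) + (b - e • b),
      Submodule.add_mem _ (Submodule.mem_sup_left (Submodule.mem_map.2 ⟨v, hv, rfl⟩))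
        (Submodule.mem_sup_right h2), ?_⟩
    have hcoe : (u : ↥B) + (v : ↥B) = e • b := by
      have := congrArg (fun y : ↥B₁ => (y : ↥B)) huv
      simpa using this
    rw [← add_assoc, hcoe]
    abel
end MainC4


theorem right_to_left_c4star_aux {S T : Type*} [Ring S] [Ring T]
    (hS : IsSemisimpleRing S)
    (hssf : IsSummandSquareFree Tᵐᵒᵖ T)
    (hlsf : LSF T) :
    IsLeftC4StarRing (S × T) := by
  classical
  set e : S × T := ((1 : S), (0 : T)) with hedef
  have he : e * e = e := by
    rw [hedef, Prod.mk_mul_mk, one_mul, mul_zero]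
  have hc : ∀ r : S × T, e * r = r * e := by
    intro r
    rw [hedef]
    exact Prod.ext (by rw [Prod.fst_mul, Prod.fst_mul, one_mul, mul_one])
      (by rw [Prod.snd_mul, Prod.snd_mul, zero_mul, mul_zero])
  set I₁ : Submodule (S × T) (S × T) := pPartAux e hc with hI₁def
  have hmem : ∀ s : S, ((s, (0 : T)) : S × T) ∈ I₁ := by
    intro s
    show e • ((s, (0 : T)) : S × T) = (s, 0)
    show e * ((s, (0 : T)) : S × T) = (s, 0)
    rw [hedef, Prod.mk_mul_mk, one_mul, mul_zero]
  have hval : ∀ x : ↥I₁, (x : S × T) = ((x : S × T).1, 0) := by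
    intro x
    have hx : e • (x : S × T) = (x : S × T) := x.2
    have hx' : e * (x : S × T) = (x : S × T) := hx
    have h2 : (e * (x : S × T)).2 = (x : S × T).2 := congrArg Prod.snd hx'
    rw [Prod.snd_mul, hedef] at h2
    simp only [zero_mul] at h2
    exact Prod.ext rfl h2.symm
  have hI₁ss : IsSemisimpleModule (S × T) ↥I₁ := by
    refine (isSemisimpleModule_iff ..).2 ⟨?_⟩
    intro X
    let XS : Submodule S S :=
      { carrier := {s : S | (⟨(s, 0), hmem s⟩ : ↥I₁) ∈ X}
        add_mem' := by
          intro a b ha hb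
          simp only [Set.mem_setOf_eq] at *
          have hab : (⟨(a + b, 0), hmem (a + b)⟩ : ↥I₁) =
              ⟨(a, 0), hmem a⟩ + ⟨(b, 0), hmem b⟩ := by
            apply Subtype.ext
            show ((a + b : S), (0 : T)) = ((a, 0) : S × T) + (b, 0)
            rw [Prod.mk_add_mk, add_zero]
          rw [hab]
          exact X.add_mem ha hb
        zero_mem' := by
          simp only [Set.mem_setOf_eq]
          have h0 : (⟨((0 : S), (0 : T)), hmem 0⟩ : ↥I₁) = 0 := by
            apply Subtype.ext
            show (((0 : S), (0 : T)) : S × T) = 0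
            rfl
          rw [h0]
          exact X.zero_mem
        smul_mem' := by
          intro c s hs
          simp only [Set.mem_setOf_eq] at *
          have hcs : (⟨(c • s, 0), hmem (c • s)⟩ : ↥I₁) =
              ((c, (0 : T)) : S × T) • ⟨(s, 0), hmem s⟩ := by
            apply Subtype.ext
            show ((c * s : S), (0 : T)) = ((c, (0 : T)) : S × T) * (s, 0)
            rw [Prod.mk_mul_mk, zero_mul]
          rw [hcs]
          exact X.smul_mem _ hs }
    haveI : IsSemisimpleModule S S := hS
    obtain ⟨YS, hYS⟩ := exists_isCompl XS
    let Y : Submodule (S × T) ↥I₁ :=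
      { carrier := {x : ↥I₁ | (x : S × T).1 ∈ YS}
        add_mem' := by
          intro a b ha hb
          simp only [Set.mem_setOf_eq] at *
          have : ((a + b : ↥I₁) : S × T).1 = (a : S × T).1 + (b : S × T).1 := rfl
          rw [this]
          exact YS.add_mem ha hb
        zero_mem' := by
          simp only [Set.mem_setOf_eq]
          exact YS.zero_mem
        smul_mem' := by
          intro c x hx
          simp only [Set.mem_setOf_eq] at *
          have : ((c • x : ↥I₁) : S × T).1 = c.1 * (x : S × T).1 := Prod.fst_mul _ _
          rw [this]
          exact YS.smul_mem c.1 hx }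
    refine ⟨Y, ?_, ?_⟩
    · rw [disjoint_iff, Submodule.eq_bot_iff]
      intro x hx
      obtain ⟨hxX, hxY⟩ := Submodule.mem_inf.1 hx
      have hx' : (⟨((x : S × T).1, 0), hmem _⟩ : ↥I₁) = x := Subtype.ext (hval x).symm
      have h1 : (x : S × T).1 ∈ XS := by
        show (⟨((x : S × T).1, 0), hmem _⟩ : ↥I₁) ∈ X
        rw [hx']
        exact hxX
      have h0 : (x : S × T).1 = 0 := by
        have := hYS.disjoint.le_bot (Submodule.mem_inf.2 ⟨h1, hxY⟩)
        simpa using this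
      apply Subtype.ext
      rw [hval x, h0]
      rfl
    · rw [codisjoint_iff, eq_top_iff]
      intro x _
      have hxtop : (x : S × T).1 ∈ XS ⊔ YS := by rw [hYS.codisjoint.eq_top]; trivial
      obtain ⟨s₁, hs₁, s₂, hs₂, hsum⟩ := Submodule.mem_sup.1 hxtop
      refine Submodule.mem_sup.2 ⟨⟨(s₁, 0), hmem _⟩, hs₁, ⟨(s₂, 0), hmem _⟩, hs₂, ?_⟩
      apply Subtype.ext
      show ((s₁, (0 : T)) : S × T) + (s₂, 0) = (x : S × T)
      rw [Prod.mk_add_mk, add_zero, hsum, hval x]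
  intro N
  apply mainC4 e he hc
  · -- semisimplicity of the e-part of N
    refine isSemisimple_of_injective
      (LinearMap.codRestrict I₁
        (N.subtype ∘ₗ (pPartAux e hc : Submodule (S × T) ↥N).subtype) ?_) ?_ hI₁ss
    · intro x
      have hx : e • ((x : ↥N)) = (x : ↥N) := x.2
      show e • (((x : ↥N) : S × T)) = ((x : ↥N) : S × T)
      rw [← Submodule.coe_smul, hx]
    · rw [← LinearMap.ker_eq_bot, LinearMap.ker_codRestrict, LinearMap.ker_eq_bot]
      exact N.injective_subtype.comp (Submodule.injective_subtype _)
  · -- square-freeness of the (1-e)-part of N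
    intro X Y hXq hYq hX0 hY0 hXY
    have hTsf : IsSquareFreeModule T T := hlsf hssf
    refine ⟨fun q => ?_⟩
    have hXv : ∀ x : ↥N, x ∈ X → (x : S × T) = (0, (x : S × T).2) := by
      intro x hx
      have h1 : e • x = (0 : ↥N) := hXq hx
      have h2 : e • (x : S × T) = 0 := by
        rw [← Submodule.coe_smul, h1, Submodule.coe_zero]
      have h3 : (x : S × T).1 = 0 := by
        have h4 := congrArg Prod.fst h2
        rw [show e • (x : S × T) = e * (x : S × T) from rfl, Prod.fst_mul, hedef] at h4
        simpa using h4
      exact Prod.ext h3 rfl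
    have hYv : ∀ x : ↥N, x ∈ Y → (x : S × T) = (0, (x : S × T).2) := by
      intro x hx
      have h1 : e • x = (0 : ↥N) := hYq hx
      have h2 : e • (x : S × T) = 0 := by
        rw [← Submodule.coe_smul, h1, Submodule.coe_zero]
      have h3 : (x : S × T).1 = 0 := by
        have h4 := congrArg Prod.fst h2
        rw [show e • (x : S × T) = e * (x : S × T) from rfl, Prod.fst_mul, hedef] at h4
        simpa using h4
      exact Prod.ext h3 rfl
    set XM := Submodule.map N.subtype X with hXMdef
    set YM := Submodule.map N.subtype Y with hYMdef
    set X' : Submodule T T :=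
      { carrier := {t : T | (((0 : S), t) : S × T) ∈ XM}
        add_mem' := by
          intro a b ha hb
          simp only [Set.mem_setOf_eq] at *
          have hab : ((((0 : S), a + b)) : S × T) = ((0 : S), a) + ((0 : S), b) := by
            rw [Prod.mk_add_mk, add_zero]
          rw [hab]
          exact XM.add_mem ha hb
        zero_mem' := by
          simp only [Set.mem_setOf_eq]
          have h0 : ((((0 : S), (0 : T))) : S × T) = 0 := rfl
          rw [h0]
          exact XM.zero_mem
        smul_mem' := by
          intro c t ht
          simp only [Set.mem_setOf_eq] at *
          have hct : ((((0 : S), c • t)) : S × T) =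
              (((0 : S), c) : S × T) • ((0 : S), t) := by
            show (((0 : S), c * t) : S × T) = (((0 : S), c) : S × T) * ((0 : S), t)
            rw [Prod.mk_mul_mk, zero_mul]
          rw [hct]
          exact XM.smul_mem _ ht } with hX'def
    set Y' : Submodule T T :=
      { carrier := {t : T | (((0 : S), t) : S × T) ∈ YM}
        add_mem' := by
          intro a b ha hb
          simp only [Set.mem_setOf_eq] at *
          have hab : ((((0 : S), a + b)) : S × T) = ((0 : S), a) + ((0 : S), b) := by
            rw [Prod.mk_add_mk, add_zero]
          rw [hab]
          exact YM.add_mem ha hb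
        zero_mem' := by
          simp only [Set.mem_setOf_eq]
          have h0 : ((((0 : S), (0 : T))) : S × T) = 0 := rfl
          rw [h0]
          exact YM.zero_mem
        smul_mem' := by
          intro c t ht
          simp only [Set.mem_setOf_eq] at *
          have hct : ((((0 : S), c • t)) : S × T) =
              (((0 : S), c) : S × T) • ((0 : S), t) := by
            show (((0 : S), c * t) : S × T) = (((0 : S), c) : S × T) * ((0 : S), t)
            rw [Prod.mk_mul_mk, zero_mul]
          rw [hct]
          exact YM.smul_mem _ ht } with hY'def
    have hmemX' : ∀ t : T, t ∈ X' ↔ (((0 : S), t) : S × T) ∈ XM := fun t => Iff.rfl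
    have hmemY' : ∀ t : T, t ∈ Y' ↔ (((0 : S), t) : S × T) ∈ YM := fun t => Iff.rfl
    have hX'0 : X' ≠ ⊥ := by
      obtain ⟨x, hxX, hx0⟩ := (Submodule.ne_bot_iff X).1 hX0
      rw [Submodule.ne_bot_iff]
      refine ⟨(x : S × T).2, ?_, ?_⟩
      · rw [hmemX']
        exact Submodule.mem_map.2 ⟨x, hxX, by rw [Submodule.subtype_apply]; exact hXv x hxX⟩
      · intro h
        apply hx0
        apply Subtype.ext
        rw [hXv x hxX, h]
        rfl
    have hY'0 : Y' ≠ ⊥ := by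
      obtain ⟨y, hyY, hy0⟩ := (Submodule.ne_bot_iff Y).1 hY0
      rw [Submodule.ne_bot_iff]
      refine ⟨(y : S × T).2, ?_, ?_⟩
      · rw [hmemY']
        exact Submodule.mem_map.2 ⟨y, hyY, by rw [Submodule.subtype_apply]; exact hYv y hyY⟩
      · intro h
        apply hy0
        apply Subtype.ext
        rw [hYv y hyY, h]
        rfl
    have hXY' : X' ⊓ Y' = ⊥ := by
      rw [Submodule.eq_bot_iff]
      intro t ht
      obtain ⟨htX, htY⟩ := Submodule.mem_inf.1 ht
      obtain ⟨x, hxX, hx⟩ := Submodule.mem_map.1 ((hmemX' t).1 htX)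
      obtain ⟨y, hyY, hy⟩ := Submodule.mem_map.1 ((hmemY' t).1 htY)
      have hxy : x = y := Subtype.ext (by
        show (x : S × T) = (y : S × T)
        have hx' : (x : S × T) = ((0 : S), t) := hx
        have hy' : (y : S × T) = ((0 : S), t) := hy
        rw [hx', hy'])
      have hx0 : x ∈ X ⊓ Y := Submodule.mem_inf.2 ⟨hxX, hxy ▸ hyY⟩
      rw [hXY] at hx0
      have : x = 0 := hx0
      have hx' : (((0 : S), t) : S × T) = 0 := by
        rw [← show N.subtype x = (((0 : S), t) : S × T) from hx, this, map_zero]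
      exact congrArg Prod.snd hx'
    -- the isomorphism
    have memX'' : ∀ x : ↥X, ((x : ↥N) : S × T).2 ∈ X' := by
      intro x
      rw [hmemX']
      exact Submodule.mem_map.2 ⟨(x : ↥N), x.2, by rw [Submodule.subtype_apply]; exact hXv _ x.2⟩
    have memY'' : ∀ y : ↥Y, ((y : ↥N) : S × T).2 ∈ Y' := by
      intro y
      rw [hmemY']
      exact Submodule.mem_map.2 ⟨(y : ↥N), y.2, by rw [Submodule.subtype_apply]; exact hYv _ y.2⟩
    set toX' : ↥X → ↥X' := fun x => ⟨((x : ↥N) : S × T).2, memX'' x⟩ with htoX'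
    set toY' : ↥Y → ↥Y' := fun y => ⟨((y : ↥N) : S × T).2, memY'' y⟩ with htoY'
    have hbijX : Function.Bijective toX' := by
      constructor
      · intro a b hab
        have h2 : ((a : ↥N) : S × T).2 = ((b : ↥N) : S × T).2 := congrArg Subtype.val hab
        have h3 : ((a : ↥N) : S × T) = ((b : ↥N) : S × T) := by
          rw [hXv _ a.2, hXv _ b.2, h2]
        exact Subtype.ext (Subtype.ext h3)
      · rintro ⟨t, ht⟩
        obtain ⟨x, hxX, hx⟩ := Submodule.mem_map.1 ((hmemX' t).1 ht)
        refine ⟨⟨x, hxX⟩, Subtype.ext ?_⟩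
        show ((x : S × T)).2 = t
        rw [show (x : S × T) = (((0 : S), t) : S × T) from hx]
    have hbijY : Function.Bijective toY' := by
      constructor
      · intro a b hab
        have h2 : ((a : ↥N) : S × T).2 = ((b : ↥N) : S × T).2 := congrArg Subtype.val hab
        have h3 : ((a : ↥N) : S × T) = ((b : ↥N) : S × T) := by
          rw [hYv _ a.2, hYv _ b.2, h2]
        exact Subtype.ext (Subtype.ext h3)
      · rintro ⟨t, ht⟩
        obtain ⟨y, hyY, hy⟩ := Submodule.mem_map.1 ((hmemY' t).1 ht)
        refine ⟨⟨y, hyY⟩, Subtype.ext ?_⟩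
        show ((y : S × T)).2 = t
        rw [show (y : S × T) = (((0 : S), t) : S × T) from hy]
    have haddX : ∀ a b : ↥X, toX' (a + b) = toX' a + toX' b := by
      intro a b
      apply Subtype.ext
      show (((a + b : ↥X) : ↥N) : S × T).2 = ((a : ↥N) : S × T).2 + ((b : ↥N) : S × T).2
      rfl
    have haddY : ∀ a b : ↥Y, toY' (a + b) = toY' a + toY' b := by
      intro a b
      apply Subtype.ext
      show (((a + b : ↥Y) : ↥N) : S × T).2 = ((a : ↥N) : S × T).2 + ((b : ↥N) : S × T).2
      rfl
    set aX : ↥X ≃+ ↥X' := AddEquiv.mk' (Equiv.ofBijective toX' hbijX) haddX with haXdef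
    set aY : ↥Y ≃+ ↥Y' := AddEquiv.mk' (Equiv.ofBijective toY' hbijY) haddY with haYdef
    have keyX : ∀ (c : T) (x : ↥X), aX ((((0 : S), c) : S × T) • x) = c • aX x := by
      intro c x
      apply Subtype.ext
      show ((((((0 : S), c) : S × T) • x : ↥X) : ↥N) : S × T).2 = c * ((x : ↥N) : S × T).2
      show (((((0 : S), c) : S × T) * ((x : ↥N) : S × T))).2 = c * ((x : ↥N) : S × T).2
      rw [Prod.snd_mul]
    have keyY : ∀ (c : T) (y : ↥Y), aY ((((0 : S), c) : S × T) • y) = c • aY y := by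
      intro c y
      apply Subtype.ext
      show ((((((0 : S), c) : S × T) • y : ↥Y) : ↥N) : S × T).2 = c * ((y : ↥N) : S × T).2
      show (((((0 : S), c) : S × T) * ((y : ↥N) : S × T))).2 = c * ((y : ↥N) : S × T).2
      rw [Prod.snd_mul]
    set E : ↥X' ≃+ ↥Y' := aX.symm.trans (q.toAddEquiv.trans aY) with hEdef
    have hsm : ∀ (c : T) (v : ↥X'), E (c • v) = c • E v := by
      intro c v
      have hsymm : aX.symm (c • v) = (((0 : S), c) : S × T) • aX.symm v := by
        apply aX.injective
        rw [keyX, aX.apply_symm_apply, aX.apply_symm_apply]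
      show aY (q.toAddEquiv (aX.symm (c • v))) = c • aY (q.toAddEquiv (aX.symm v))
      rw [hsymm]
      have hq : q.toAddEquiv ((((0 : S), c) : S × T) • aX.symm v) =
          (((0 : S), c) : S × T) • q.toAddEquiv (aX.symm v) := q.map_smul _ _
      rw [hq, keyY]
    exact (hTsf X' Y' hX'0 hY'0 hXY').false (E.toLinearEquiv hsm)


/-- Let `R = S × T` be a right `C4*`-ring, where `S` is semisimple artinian,
the right regular module `T_T` is summand-square-free, and `T` satisfies `LSF`.
Then `R` is a left `C4*`-ring. -/
theorem right_to_left_c4star {S T : Type*} [Ring S] [Ring T]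
    (h : IsRightC4StarRing (S × T))
    (hS : IsSemisimpleRing S)
    (hssf : IsSummandSquareFree Tᵐᵒᵖ T)
    (hlsf : LSF T) :
    IsLeftC4StarRing (S × T) :=
  right_to_left_c4star_aux hS hssf hlsf
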